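/- In U_q(gl(N)), for all 1 ≤ i < j < k < l ≤ N one has [e_{il}, e_{kj}] = 0, i.e. e_{il} commutes with e_{kj}. -/

import Mathlib

/-!
Common setup: the quantum algebra `U_q(gl(N))` over `k = ℚ(q)`, presented by
generators `q^{±e_{ii}}` (`K i`, `Kinv i`), `e_{i,i+1}` (`E i`), `e_{i+1,i}` (`F i`)
(1-based indices; out-of-range generators are set to `0`, which yields an algebra
isomorphic to the usual presentation), together with the composite root vectors.
-/

noncomputable section

open scoped Classical

/-- The ground field `k = ℚ(q)`. -/
abbrev kq : Type := RatFunc ℚ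

/-- The indeterminate `q`. -/
def qq : kq := RatFunc.X

/-- Generators of `U_q(gl(N))`: `K i = q^{e_{ii}}`, `Kinv i = q^{-e_{ii}}`,
`E i = e_{i,i+1}`, `F i = e_{i+1,i}` (1-based). -/
inductive UqGen : Type
  | K : ℕ → UqGen
  | Kinv : ℕ → UqGen
  | E : ℕ → UqGen
  | F : ℕ → UqGen

/-- `q^{e_{ii}}` in the free algebra. -/
def fK (i : ℕ) : FreeAlgebra kq UqGen := FreeAlgebra.ι kq (UqGen.K i)
/-- `q^{-e_{ii}}` in the free algebra. -/
def fKinv (i : ℕ) : FreeAlgebra kq UqGen := FreeAlgebra.ι kq (UqGen.Kinv i)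
/-- `e_{i,i+1}` in the free algebra. -/
def fE (i : ℕ) : FreeAlgebra kq UqGen := FreeAlgebra.ι kq (UqGen.E i)
/-- `e_{i+1,i}` in the free algebra. -/
def fF (i : ℕ) : FreeAlgebra kq UqGen := FreeAlgebra.ι kq (UqGen.F i)

/-- The defining relations of `U_q(gl(N))`.  Valid index ranges: `1 ≤ i ≤ N` for the
Cartan generators, `1 ≤ i ≤ N-1` for `E i`, `F i`; out-of-range generators are set to `0`. -/
inductive UqRel (N : ℕ) : FreeAlgebra kq UqGen → FreeAlgebra kq UqGen → Prop
  | Kzero (i : ℕ) (h : i = 0 ∨ N < i) : UqRel N (fK i) 0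
  | Kinvzero (i : ℕ) (h : i = 0 ∨ N < i) : UqRel N (fKinv i) 0
  | Ezero (i : ℕ) (h : i = 0 ∨ N < i + 1) : UqRel N (fE i) 0
  | Fzero (i : ℕ) (h : i = 0 ∨ N < i + 1) : UqRel N (fF i) 0
  | KKinv (i : ℕ) (h1 : 1 ≤ i) (h2 : i ≤ N) : UqRel N (fK i * fKinv i) 1
  | KinvK (i : ℕ) (h1 : 1 ≤ i) (h2 : i ≤ N) : UqRel N (fKinv i * fK i) 1
  | KK (i j : ℕ) (h1 : 1 ≤ i) (h2 : i ≤ N) (h3 : 1 ≤ j) (h4 : j ≤ N) :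
      UqRel N (fK i * fK j) (fK j * fK i)
  | KE (i j : ℕ) (h1 : 1 ≤ i) (h2 : i ≤ N) (h3 : 1 ≤ j) (h4 : j + 1 ≤ N) :
      UqRel N (fK i * fE j * fKinv i)
        ((qq ^ (((if i = j then 1 else 0) - (if i = j + 1 then 1 else 0) : ℤ))) • fE j)
  | KF (i j : ℕ) (h1 : 1 ≤ i) (h2 : i ≤ N) (h3 : 1 ≤ j) (h4 : j + 1 ≤ N) :
      UqRel N (fK i * fF j * fKinv i)
        ((qq ^ (((if i = j + 1 then 1 else 0) - (if i = j then 1 else 0) : ℤ))) • fF j)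
  | EF (i j : ℕ) (h1 : 1 ≤ i) (h2 : i + 1 ≤ N) (h3 : 1 ≤ j) (h4 : j + 1 ≤ N) :
      UqRel N (fE i * fF j - fF j * fE i)
        (if i = j then (qq - qq⁻¹)⁻¹ • (fK i * fKinv (i + 1) - fK (i + 1) * fKinv i) else 0)
  | EE (i j : ℕ) (h1 : 1 ≤ i) (h2 : i + 1 ≤ N) (h3 : 1 ≤ j) (h4 : j + 1 ≤ N)
      (h5 : i + 2 ≤ j ∨ j + 2 ≤ i) : UqRel N (fE i * fE j) (fE j * fE i)
  | FF (i j : ℕ) (h1 : 1 ≤ i) (h2 : i + 1 ≤ N) (h3 : 1 ≤ j) (h4 : j + 1 ≤ N)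
      (h5 : i + 2 ≤ j ∨ j + 2 ≤ i) : UqRel N (fF i * fF j) (fF j * fF i)
  | SerreE (i j : ℕ) (h1 : 1 ≤ i) (h2 : i + 1 ≤ N) (h3 : 1 ≤ j) (h4 : j + 1 ≤ N)
      (h5 : i + 1 = j ∨ j + 1 = i) :
      UqRel N (fE i ^ 2 * fE j - (qq + qq⁻¹) • (fE i * fE j * fE i) + fE j * fE i ^ 2) 0
  | SerreF (i j : ℕ) (h1 : 1 ≤ i) (h2 : i + 1 ≤ N) (h3 : 1 ≤ j) (h4 : j + 1 ≤ N)
      (h5 : i + 1 = j ∨ j + 1 = i) :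
      UqRel N (fF i ^ 2 * fF j - (qq + qq⁻¹) • (fF i * fF j * fF i) + fF j * fF i ^ 2) 0

/-- The quantum algebra `U_q(gl(N))`. -/
abbrev Uq (N : ℕ) : Type := RingQuot (UqRel N)

/-- Canonical projection onto `U_q(gl(N))`. -/
def mkU (N : ℕ) : FreeAlgebra kq UqGen →ₐ[kq] Uq N := RingQuot.mkAlgHom kq (UqRel N)

/-- `q^{e_{ii}}` in `U_q(gl(N))`. -/
def KU (N i : ℕ) : Uq N := mkU N (fK i)
/-- `q^{-e_{ii}}` in `U_q(gl(N))`. -/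
def KinvU (N i : ℕ) : Uq N := mkU N (fKinv i)
/-- `e_{i,i+1}` in `U_q(gl(N))`. -/
def EU (N i : ℕ) : Uq N := mkU N (fE i)
/-- `e_{i+1,i}` in `U_q(gl(N))`. -/
def FU (N i : ℕ) : Uq N := mkU N (fF i)

/-- `eUpD N i d` is the raising composite root vector `e_{i,i+d}`:
`e_{i,i+1} = E i` and `e_{ij} = e_{i,j-1} e_{j-1,j} - q⁻¹ e_{j-1,j} e_{i,j-1}`. -/
def eUpD (N i : ℕ) : ℕ → Uq N
  | 0 => 0
  | 1 => EU N i
  | (d + 2) => eUpD N i (d + 1) * EU N (i + d + 1) - qq⁻¹ • (EU N (i + d + 1) * eUpD N i (d + 1))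

/-- `eDnD N i d` is the lowering composite root vector `e_{i+d,i}`:
`e_{i+1,i} = F i` and `e_{ji} = e_{j,j-1} e_{j-1,i} - q e_{j-1,i} e_{j,j-1}`. -/
def eDnD (N i : ℕ) : ℕ → Uq N
  | 0 => 0
  | 1 => FU N i
  | (d + 2) => FU N (i + d + 1) * eDnD N i (d + 1) - qq • (eDnD N i (d + 1) * FU N (i + d + 1))

/-- The Cartan–Weyl root vector `e_{ij}` (`i ≠ j`) of `U_q(gl(N))`. -/
def eGen (N i j : ℕ) : Uq N :=
  if i < j then eUpD N i (j - i) else if j < i then eDnD N j (i - j) else 0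

/-- Primed raising composite root vectors: `e'_{i,i+1} = e_{i,i+1}` and
`e'_{ij} = e'_{i,j-1} e_{j-1,j} - q e_{j-1,j} e'_{i,j-1}`. -/
def eUpD' (N i : ℕ) : ℕ → Uq N
  | 0 => 0
  | 1 => EU N i
  | (d + 2) => eUpD' N i (d + 1) * EU N (i + d + 1) - qq • (EU N (i + d + 1) * eUpD' N i (d + 1))

/-- Primed lowering composite root vectors: `e'_{i+1,i} = e_{i+1,i}` and
`e'_{ji} = e_{j,j-1} e'_{j-1,i} - q⁻¹ e'_{j-1,i} e_{j,j-1}`. -/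
def eDnD' (N i : ℕ) : ℕ → Uq N
  | 0 => 0
  | 1 => FU N i
  | (d + 2) => FU N (i + d + 1) * eDnD' N i (d + 1) - qq⁻¹ • (eDnD' N i (d + 1) * FU N (i + d + 1))

/-- The primed Cartan–Weyl root vector `e'_{ij}` of `U_q(gl(N))`. -/
def eGen' (N i j : ℕ) : Uq N :=
  if i < j then eUpD' N i (j - i) else if j < i then eDnD' N j (i - j) else 0

end

noncomputable section
-- ## Auxiliary lemmas

lemma qq_ne : (qq : kq) ≠ 0 := RatFunc.X_ne_zero

lemma mkU_rel {N : ℕ} {a b : FreeAlgebra kq UqGen} (h : UqRel N a b) : mkU N a = mkU N b :=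
  RingQuot.mkAlgHom_rel kq h

variable {N : ℕ}

lemma K_Kinv {a : ℕ} (h1 : 1 ≤ a) (h2 : a ≤ N) : KU N a * KinvU N a = 1 := by
  have h := mkU_rel (UqRel.KKinv (N := N) a h1 h2)
  rwa [map_mul, map_one] at h

lemma Kinv_K {a : ℕ} (h1 : 1 ≤ a) (h2 : a ≤ N) : KinvU N a * KU N a = 1 := by
  have h := mkU_rel (UqRel.KinvK (N := N) a h1 h2)
  rwa [map_mul, map_one] at h

lemma KE_swap {a b : ℕ} (h1 : 1 ≤ a) (h2 : a ≤ N) (h3 : 1 ≤ b) (h4 : b + 1 ≤ N) :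
    KU N a * EU N b
      = (qq ^ (((if a = b then 1 else 0) - (if a = b + 1 then 1 else 0) : ℤ))) •
        (EU N b * KU N a) := by
  have h := mkU_rel (UqRel.KE (N := N) a b h1 h2 h3 h4)
  rw [map_mul, map_mul, map_smul] at h
  have h5 : KinvU N a * KU N a = 1 := Kinv_K h1 h2
  calc KU N a * EU N b = KU N a * EU N b * (KinvU N a * KU N a) := by rw [h5, mul_one]
    _ = (KU N a * EU N b * KinvU N a) * KU N a := by rw [← mul_assoc]
    _ = _ := by rw [show (KU N a * EU N b * KinvU N a : Uq N)
            = mkU N (fK a) * mkU N (fE b) * mkU N (fKinv a) from rfl, h, smul_mul_assoc]; rfl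

lemma K_E_comm {a b : ℕ} (h1 : 1 ≤ a) (h2 : a ≤ N) (h3 : 1 ≤ b) (h4 : b + 1 ≤ N)
    (hne : a ≠ b) (hne1 : a ≠ b + 1) : KU N a * EU N b = EU N b * KU N a := by
  have h := KE_swap (N := N) h1 h2 h3 h4
  rw [if_neg hne, if_neg hne1] at h
  simpa using h

lemma K_E_self {b : ℕ} (h3 : 1 ≤ b) (h4 : b + 1 ≤ N) :
    KU N b * EU N b = qq • (EU N b * KU N b) := by
  have h := KE_swap (N := N) (a := b) (b := b) h3 (by omega) h3 h4
  rw [if_pos rfl, if_neg (by omega : b ≠ b + 1)] at h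
  simpa using h

lemma K_E_succ {b : ℕ} (h3 : 1 ≤ b) (h4 : b + 1 ≤ N) :
    KU N (b + 1) * EU N b = qq⁻¹ • (EU N b * KU N (b + 1)) := by
  have h := KE_swap (N := N) (a := b + 1) (b := b) (by omega) h4 h3 h4
  rw [if_neg (by omega : b + 1 ≠ b), if_pos rfl] at h
  simpa [zpow_neg_one] using h

/-- Generic: from `K X = w • (X K)` and `K`-invertibility derive `Ki X = w⁻¹ • (X Ki)`. -/
lemma swap_inv {R : Type*} [Ring R] [Algebra kq R] {K Ki X : R} {w : kq}
    (hKKi : K * Ki = 1) (hKiK : Ki * K = 1) (hw : w ≠ 0)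
    (h : K * X = w • (X * K)) : Ki * X = w⁻¹ • (X * Ki) := by
  have h1 : X * Ki = w • (Ki * X) := by
    calc X * Ki = Ki * (K * X) * Ki := by rw [← mul_assoc, hKiK, one_mul]
      _ = Ki * (w • (X * K)) * Ki := by rw [h]
      _ = w • (Ki * (X * K) * Ki) := by rw [mul_smul_comm, smul_mul_assoc]
      _ = w • (Ki * X) := by rw [← mul_assoc Ki X K, mul_assoc (Ki * X) K Ki, hKKi, mul_one]
  calc Ki * X = w⁻¹ • (w • (Ki * X)) := by rw [smul_smul, inv_mul_cancel₀ hw, one_smul]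
    _ = w⁻¹ • (X * Ki) := by rw [← h1]

lemma Kinv_E_comm {a b : ℕ} (h1 : 1 ≤ a) (h2 : a ≤ N) (h3 : 1 ≤ b) (h4 : b + 1 ≤ N)
    (hne : a ≠ b) (hne1 : a ≠ b + 1) : KinvU N a * EU N b = EU N b * KinvU N a := by
  have h0 : KU N a * EU N b = (1 : kq) • (EU N b * KU N a) := by
    rw [one_smul]; exact K_E_comm h1 h2 h3 h4 hne hne1
  have h := swap_inv (K_Kinv h1 h2) (Kinv_K h1 h2) (one_ne_zero (α := kq)) h0
  simpa using h

lemma Kinv_E_self {b : ℕ} (h3 : 1 ≤ b) (h4 : b + 1 ≤ N) :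
    KinvU N b * EU N b = qq⁻¹ • (EU N b * KinvU N b) :=
  swap_inv (K_Kinv h3 (by omega)) (Kinv_K h3 (by omega)) qq_ne (K_E_self h3 h4)

lemma Kinv_E_succ {b : ℕ} (h3 : 1 ≤ b) (h4 : b + 1 ≤ N) :
    KinvU N (b + 1) * EU N b = qq • (EU N b * KinvU N (b + 1)) := by
  have h := swap_inv (K_Kinv (a := b + 1) (by omega) h4) (Kinv_K (a := b + 1) (by omega) h4)
    (inv_ne_zero qq_ne) (K_E_succ h3 h4)
  simpa using h

lemma E_F_comm {a b : ℕ} (h1 : 1 ≤ a) (h2 : a + 1 ≤ N) (h3 : 1 ≤ b) (h4 : b + 1 ≤ N)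
    (hne : a ≠ b) : EU N a * FU N b = FU N b * EU N a := by
  have h := mkU_rel (UqRel.EF (N := N) a b h1 h2 h3 h4)
  rw [if_neg hne, map_sub, map_mul, map_mul, map_zero] at h
  exact sub_eq_zero.mp h

lemma E_F_self {a : ℕ} (h1 : 1 ≤ a) (h2 : a + 1 ≤ N) :
    EU N a * FU N a - FU N a * EU N a
      = (qq - qq⁻¹)⁻¹ • (KU N a * KinvU N (a + 1) - KU N (a + 1) * KinvU N a) := by
  have h := mkU_rel (UqRel.EF (N := N) a a h1 h2 h1 h2)
  rw [if_pos rfl, map_sub, map_mul, map_mul, map_smul, map_sub, map_mul, map_mul] at h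
  exact h

lemma E_E_comm {a b : ℕ} (h1 : 1 ≤ a) (h2 : a + 1 ≤ N) (h3 : 1 ≤ b) (h4 : b + 1 ≤ N)
    (h5 : a + 2 ≤ b ∨ b + 2 ≤ a) : EU N a * EU N b = EU N b * EU N a := by
  have h := mkU_rel (UqRel.EE (N := N) a b h1 h2 h3 h4 h5)
  rwa [map_mul, map_mul] at h

end

noncomputable section
variable {N : ℕ}

/-- If `X` commutes with `A` and `E`, it commutes with `A * E - w • (E * A)`. -/
lemma comm_step {R : Type*} [Ring R] [Algebra kq R] (A E X : R) (w : kq)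
    (hA : X * A = A * X) (hE : X * E = E * X) :
    X * (A * E - w • (E * A)) = (A * E - w • (E * A)) * X := by
  have e1 : X * (A * E) = (A * E) * X := by rw [← mul_assoc, hA, mul_assoc, hE, ← mul_assoc]
  have e2 : X * (E * A) = (E * A) * X := by rw [← mul_assoc, hE, mul_assoc, hA, ← mul_assoc]
  rw [mul_sub, sub_mul, mul_smul_comm, smul_mul_assoc, e1, e2]

lemma comm_eUpD (i d : ℕ) (X : Uq N)
    (h : ∀ b, i ≤ b → b < i + d → X * EU N b = EU N b * X) :
    X * eUpD N i d = eUpD N i d * X := by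
  induction d with
  | zero => simp [eUpD]
  | succ d ih =>
    cases d with
    | zero => simpa [eUpD] using h i le_rfl (by omega)
    | succ d' =>
      have h1 : X * eUpD N i (d' + 1) = eUpD N i (d' + 1) * X :=
        ih (fun b hb1 hb2 => h b hb1 (by omega))
      have h2 : X * EU N (i + d' + 1) = EU N (i + d' + 1) * X := h (i + d' + 1) (by omega) (by omega)
      show X * eUpD N i (d' + 2) = eUpD N i (d' + 2) * X
      simp only [eUpD]
      exact comm_step _ _ _ _ h1 h2

lemma comm_eDnD (j d : ℕ) (X : Uq N)
    (h : ∀ b, j ≤ b → b < j + d → X * FU N b = FU N b * X) :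
    X * eDnD N j d = eDnD N j d * X := by
  induction d with
  | zero => simp [eDnD]
  | succ d ih =>
    cases d with
    | zero => simpa [eDnD] using h j le_rfl (by omega)
    | succ d' =>
      have h1 : X * eDnD N j (d' + 1) = eDnD N j (d' + 1) * X :=
        ih (fun b hb1 hb2 => h b hb1 (by omega))
      have h2 : X * FU N (j + d' + 1) = FU N (j + d' + 1) * X := h (j + d' + 1) (by omega) (by omega)
      show X * eDnD N j (d' + 2) = eDnD N j (d' + 2) * X
      simp only [eDnD]
      exact comm_step _ _ _ _ h2 h1

/-- If `X` commutes with all the interior `E`'s and `w`-swaps with the top `E`,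
then it `w`-swaps with `eUpD`. -/
lemma swap_eUpD (i d : ℕ) (hd : 1 ≤ d) (X : Uq N) (w : kq)
    (htop : X * EU N (i + d - 1) = w • (EU N (i + d - 1) * X))
    (hother : ∀ b, i ≤ b → b + 1 < i + d → X * EU N b = EU N b * X) :
    X * eUpD N i d = w • (eUpD N i d * X) := by
  cases d with
  | zero => omega
  | succ d =>
    cases d with
    | zero => simpa [eUpD] using htop
    | succ d' =>
      have hA : X * eUpD N i (d' + 1) = eUpD N i (d' + 1) * X :=
        comm_eUpD i (d' + 1) X (fun b hb1 hb2 => hother b hb1 (by omega))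
      have hE : X * EU N (i + d' + 1) = w • (EU N (i + d' + 1) * X) := by
        have h0 := htop
        rwa [show i + (d' + 1 + 1) - 1 = i + d' + 1 from by omega] at h0
      show X * eUpD N i (d' + 2) = w • (eUpD N i (d' + 2) * X)
      simp only [eUpD]
      set A := eUpD N i (d' + 1) with hAdef
      set E := EU N (i + d' + 1) with hEdef
      have e1 : X * (A * E) = w • (A * E * X) := by
        rw [← mul_assoc, hA, mul_assoc, hE, mul_smul_comm, ← mul_assoc]
      have e2 : X * (E * A) = w • (E * A * X) := by
        rw [← mul_assoc, hE, smul_mul_assoc, mul_assoc, hA, ← mul_assoc]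
      calc X * (A * E - qq⁻¹ • (E * A))
          = X * (A * E) - qq⁻¹ • (X * (E * A)) := by rw [mul_sub, mul_smul_comm]
        _ = w • (A * E * X) - qq⁻¹ • (w • (E * A * X)) := by rw [e1, e2]
        _ = w • ((A * E - qq⁻¹ • (E * A)) * X) := by
            simp only [sub_mul, smul_mul_assoc, smul_sub, smul_smul]
            rw [mul_comm qq⁻¹ w]

lemma K_top (i d m : ℕ) (hi : 1 ≤ i) (hd : 1 ≤ d) (hm : m = i + d) (hdN : i + d ≤ N) :
    KU N m * eUpD N i d = qq⁻¹ • (eUpD N i d * KU N m) := by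
  subst hm
  refine swap_eUpD i d hd _ _ ?_ ?_
  · have h := K_E_succ (N := N) (b := i + d - 1) (by omega) (by omega)
    rwa [show i + d - 1 + 1 = i + d from by omega] at h
  · intro b hb1 hb2
    exact K_E_comm (by omega) hdN (by omega) (by omega) (by omega) (by omega)

lemma Kinv_top (i d m : ℕ) (hi : 1 ≤ i) (hd : 1 ≤ d) (hm : m = i + d) (hdN : i + d ≤ N) :
    KinvU N m * eUpD N i d = qq • (eUpD N i d * KinvU N m) := by
  subst hm
  have h := swap_eUpD i d hd (KinvU N (i + d)) qq ?_ ?_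
  · exact h
  · have h := Kinv_E_succ (N := N) (b := i + d - 1) (by omega) (by omega)
    rwa [show i + d - 1 + 1 = i + d from by omega] at h
  · intro b hb1 hb2
    exact Kinv_E_comm (by omega) hdN (by omega) (by omega) (by omega) (by omega)

lemma K_far (i d b : ℕ) (hi : 1 ≤ i) (hb : i + d + 1 ≤ b) (hbN : b ≤ N) :
    KU N b * eUpD N i d = eUpD N i d * KU N b := by
  refine comm_eUpD i d _ (fun c hc1 hc2 => ?_)
  exact K_E_comm (by omega) hbN (by omega) (by omega) (by omega) (by omega)

lemma Kinv_far (i d b : ℕ) (hi : 1 ≤ i) (hb : i + d + 1 ≤ b) (hbN : b ≤ N) :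
    KinvU N b * eUpD N i d = eUpD N i d * KinvU N b := by
  refine comm_eUpD i d _ (fun c hc1 hc2 => ?_)
  exact Kinv_E_comm (by omega) hbN (by omega) (by omega) (by omega) (by omega)

lemma F_comm_eUpD (i d a : ℕ) (hi : 1 ≤ i) (ha : i + d ≤ a) (haN : a + 1 ≤ N) :
    FU N a * eUpD N i d = eUpD N i d * FU N a := by
  refine comm_eUpD i d _ (fun c hc1 hc2 => ?_)
  exact (E_F_comm (by omega) (by omega) (by omega) haN (by omega)).symm

lemma E_far (i d b : ℕ) (hi : 1 ≤ i) (hb : i + d + 1 ≤ b) (hbN : b + 1 ≤ N) :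
    EU N b * eUpD N i d = eUpD N i d * EU N b := by
  refine comm_eUpD i d _ (fun c hc1 hc2 => ?_)
  exact E_E_comm (by omega) hbN (by omega) (by omega) (Or.inr (by omega))

end

noncomputable section
variable {N : ℕ}

/-- `[e_{i,m+1}, F_m] = c • e_{i,m} K_m K_{m+1}⁻¹` where `m = i + d`. -/
lemma L2 (i d : ℕ) (hi : 1 ≤ i) (hd : 1 ≤ d) (hdN : i + d + 1 ≤ N) :
    eUpD N i (d + 1) * FU N (i + d) - FU N (i + d) * eUpD N i (d + 1)
      = ((qq - qq⁻¹)⁻¹ - qq⁻¹ * ((qq - qq⁻¹)⁻¹ * qq⁻¹)) •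
        (eUpD N i d * (KU N (i + d) * KinvU N (i + d + 1))) := by
  cases d with
  | zero => omega
  | succ d' =>
    rw [show i + (d' + 1) = i + d' + 1 from by omega]
    have hdN' : i + d' + 1 + 1 ≤ N := by omega
    show eUpD N i (d' + 2) * FU N (i + d' + 1) - FU N (i + d' + 1) * eUpD N i (d' + 2)
      = ((qq - qq⁻¹)⁻¹ - qq⁻¹ * ((qq - qq⁻¹)⁻¹ * qq⁻¹)) •
        (eUpD N i (d' + 1) * (KU N (i + d' + 1) * KinvU N (i + d' + 1 + 1)))
    simp only [eUpD]
    set s : kq := (qq - qq⁻¹)⁻¹ with hs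
    set A := eUpD N i (d' + 1) with hAdef
    set E := EU N (i + d' + 1) with hEdef
    set F := FU N (i + d' + 1) with hFdef
    set P := KU N (i + d' + 1) * KinvU N (i + d' + 1 + 1) with hPdef
    set Q := KU N (i + d' + 1 + 1) * KinvU N (i + d' + 1) with hQdef
    have hFA : F * A = A * F := F_comm_eUpD i (d' + 1) (i + d' + 1) hi (by omega) (by omega)
    have hEF : E * F - F * E = s • (P - Q) := E_F_self (by omega) (by omega)
    have hPA : P * A = qq⁻¹ • (A * P) := by
      calc P * A = KU N (i + d' + 1) * (KinvU N (i + d' + 1 + 1) * A) := by rw [hPdef, mul_assoc]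
        _ = KU N (i + d' + 1) * (A * KinvU N (i + d' + 1 + 1)) := by
            rw [Kinv_far i (d' + 1) (i + d' + 1 + 1) hi (by omega) (by omega)]
        _ = (KU N (i + d' + 1) * A) * KinvU N (i + d' + 1 + 1) := by rw [mul_assoc]
        _ = (qq⁻¹ • (A * KU N (i + d' + 1))) * KinvU N (i + d' + 1 + 1) := by
            rw [K_top i (d' + 1) (i + d' + 1) hi (by omega) (by omega) (by omega)]
        _ = qq⁻¹ • (A * P) := by rw [smul_mul_assoc, mul_assoc, hPdef]
    have hQA : Q * A = qq • (A * Q) := by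
      calc Q * A = KU N (i + d' + 1 + 1) * (KinvU N (i + d' + 1) * A) := by rw [hQdef, mul_assoc]
        _ = KU N (i + d' + 1 + 1) * (qq • (A * KinvU N (i + d' + 1))) := by
            rw [Kinv_top i (d' + 1) (i + d' + 1) hi (by omega) (by omega) (by omega)]
        _ = qq • ((KU N (i + d' + 1 + 1) * A) * KinvU N (i + d' + 1)) := by
            rw [mul_smul_comm, mul_assoc]
        _ = qq • ((A * KU N (i + d' + 1 + 1)) * KinvU N (i + d' + 1)) := by
            rw [K_far i (d' + 1) (i + d' + 1 + 1) hi (by omega) (by omega)]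
        _ = qq • (A * Q) := by rw [mul_assoc, hQdef]
    have hAQ : A * Q = qq⁻¹ • (Q * A) := by
      rw [hQA, smul_smul, inv_mul_cancel₀ qq_ne, one_smul]
    have h1 : A * E * F - F * (A * E) = A * (E * F - F * E) := by
      calc A * E * F - F * (A * E) = A * (E * F) - A * (F * E) := by
            rw [mul_assoc, ← mul_assoc F A E, hFA, mul_assoc]
        _ = A * (E * F - F * E) := (mul_sub A _ _).symm
    have h2 : E * A * F - F * (E * A) = (E * F - F * E) * A := by
      calc E * A * F - F * (E * A) = E * F * A - F * E * A := by
            rw [mul_assoc E A F, ← hFA, ← mul_assoc, ← mul_assoc F E A]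
        _ = (E * F - F * E) * A := (sub_mul _ _ A).symm
    calc (A * E - qq⁻¹ • (E * A)) * F - F * (A * E - qq⁻¹ • (E * A))
        = (A * E * F - F * (A * E)) - qq⁻¹ • (E * A * F - F * (E * A)) := by
          simp only [sub_mul, mul_sub, smul_mul_assoc, mul_smul_comm, smul_sub]
          abel
      _ = A * (E * F - F * E) - qq⁻¹ • ((E * F - F * E) * A) := by rw [h1, h2]
      _ = (s • (A * P) - s • (A * Q)) - (qq⁻¹ • (s • (P * A)) - qq⁻¹ • (s • (Q * A))) := by
          rw [hEF]
          simp only [mul_smul_comm, smul_mul_assoc, mul_sub, sub_mul, smul_sub]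
      _ = s • (A * P) - (qq⁻¹ * (s * qq⁻¹)) • (A * P) := by
          rw [hPA, hAQ]
          simp only [smul_smul]
          rw [mul_comm s qq⁻¹]
          abel
      _ = (s - qq⁻¹ * (s * qq⁻¹)) • (A * P) := by
          rw [Algebra.smul_def, Algebra.smul_def, Algebra.smul_def, map_sub, sub_mul]

/-- `e_{i,i+d}` commutes with `F_{i+t}` for `1 ≤ t`, `t + 2 ≤ d`. -/
lemma L1 (i t d : ℕ) (hi : 1 ≤ i) (ht : 1 ≤ t) (htd : t + 2 ≤ d) (hdN : i + d ≤ N) :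
    eUpD N i d * FU N (i + t) = FU N (i + t) * eUpD N i d := by
  revert hdN
  induction d, htd using Nat.le_induction with
  | base =>
    intro hdN
    show eUpD N i (t + 2) * FU N (i + t) = FU N (i + t) * eUpD N i (t + 2)
    simp only [eUpD]
    have hh := L2 (N := N) i t hi ht (by omega)
    generalize hc : ((qq - qq⁻¹)⁻¹ - qq⁻¹ * ((qq - qq⁻¹)⁻¹ * qq⁻¹)) = c at hh
    set A := eUpD N i (t + 1) with hAdef
    set B := eUpD N i t with hBdef
    set E := EU N (i + t + 1) with hEdef
    set F := FU N (i + t) with hFdef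
    set P := KU N (i + t) * KinvU N (i + t + 1) with hPdef
    have hEF : E * F = F * E := E_F_comm (by omega) (by omega) (by omega) (by omega) (by omega)
    have hAF : A * F = c • (B * P) + F * A := sub_eq_iff_eq_add.mp hh
    have hEB : E * B = B * E := E_far i t (i + t + 1) hi (by omega) (by omega)
    have hPE : P * E = qq⁻¹ • (E * P) := by
      calc P * E = KU N (i + t) * (KinvU N (i + t + 1) * E) := by rw [hPdef, mul_assoc]
        _ = KU N (i + t) * (qq⁻¹ • (E * KinvU N (i + t + 1))) := by
            rw [hEdef, Kinv_E_self (by omega) (by omega)]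
        _ = qq⁻¹ • ((KU N (i + t) * E) * KinvU N (i + t + 1)) := by rw [mul_smul_comm, mul_assoc]
        _ = qq⁻¹ • ((E * KU N (i + t)) * KinvU N (i + t + 1)) := by
            rw [hEdef, K_E_comm (by omega) (by omega) (by omega) (by omega) (by omega) (by omega)]
        _ = qq⁻¹ • (E * P) := by rw [mul_assoc, hPdef]
    have hBPE : (B * P) * E = qq⁻¹ • (E * (B * P)) := by
      calc (B * P) * E = B * (P * E) := by rw [mul_assoc]
        _ = B * (qq⁻¹ • (E * P)) := by rw [hPE]
        _ = qq⁻¹ • ((B * E) * P) := by rw [mul_smul_comm, mul_assoc]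
        _ = qq⁻¹ • ((E * B) * P) := by rw [hEB]
        _ = qq⁻¹ • (E * (B * P)) := by rw [mul_assoc]
    have ha : (A * E) * F = F * (A * E) + c • (qq⁻¹ • (E * (B * P))) := by
      calc (A * E) * F = A * (F * E) := by rw [mul_assoc, hEF]
        _ = (A * F) * E := by rw [mul_assoc]
        _ = (c • (B * P) + F * A) * E := by rw [hAF]
        _ = c • ((B * P) * E) + (F * A) * E := by rw [add_mul, smul_mul_assoc]
        _ = F * (A * E) + c • (qq⁻¹ • (E * (B * P))) := by rw [hBPE, mul_assoc]; abel
    have hb : (E * A) * F = F * (E * A) + c • (E * (B * P)) := by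
      calc (E * A) * F = E * (A * F) := by rw [mul_assoc]
        _ = E * (c • (B * P) + F * A) := by rw [hAF]
        _ = c • (E * (B * P)) + E * (F * A) := by rw [mul_add, mul_smul_comm]
        _ = c • (E * (B * P)) + F * (E * A) := by
            rw [← mul_assoc E F A, hEF, mul_assoc]
        _ = F * (E * A) + c • (E * (B * P)) := by abel
    calc (A * E - qq⁻¹ • (E * A)) * F
        = (A * E) * F - qq⁻¹ • ((E * A) * F) := by rw [sub_mul, smul_mul_assoc]
      _ = (F * (A * E) + c • (qq⁻¹ • (E * (B * P))))
          - qq⁻¹ • (F * (E * A) + c • (E * (B * P))) := by rw [ha, hb]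
      _ = F * (A * E) - qq⁻¹ • (F * (E * A)) := by
          simp only [smul_add, smul_smul]
          rw [mul_comm c qq⁻¹]
          abel
      _ = F * (A * E - qq⁻¹ • (E * A)) := by rw [mul_sub, mul_smul_comm]
  | succ d hd ih =>
    intro hdN
    have hA : FU N (i + t) * eUpD N i d = eUpD N i d * FU N (i + t) :=
      (ih (by omega)).symm
    obtain ⟨d', rfl⟩ : ∃ d', d = d' + 1 := ⟨d - 1, by omega⟩
    show eUpD N i (d' + 2) * FU N (i + t) = FU N (i + t) * eUpD N i (d' + 2)
    simp only [eUpD]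
    have hE : FU N (i + t) * EU N (i + d' + 1) = EU N (i + d' + 1) * FU N (i + t) :=
      (E_F_comm (by omega) (by omega) (by omega) (by omega) (by omega)).symm
    exact (comm_step _ _ _ _ hA hE).symm

end

/-- in `U_q(gl(N))`, for `1 ≤ i < j < k < l ≤ N`,
`[e_{il}, e_{kj}] = 0`, i.e. `e_{il}` commutes with `e_{kj}`. -/
theorem eil_commutes_with_ekj (N : ℕ) (hN : 2 ≤ N) (i j k l : ℕ)
    (hi : 1 ≤ i) (hij : i < j) (hjk : j < k) (hkl : k < l) (hl : l ≤ N) :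
    eGen N i l * eGen N k j = eGen N k j * eGen N i l := by
  have h1 : eGen N i l = eUpD N i (l - i) := by
    simp only [eGen]
    rw [if_pos (show i < l by omega)]
  have h2 : eGen N k j = eDnD N j (k - j) := by
    simp only [eGen]
    rw [if_neg (show ¬ k < j by omega), if_pos hjk]
  rw [h1, h2]
  refine comm_eDnD j (k - j) (eUpD N i (l - i)) (fun b hb1 hb2 => ?_)
  have h := L1 (N := N) i (b - i) (l - i) hi (by omega) (by omega) (by omega)
  rwa [show i + (b - i) = b from by omega] at h
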